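/- Let A, B, C, D, E ∈ ℝ with C > 2A² and D ≤ E. Then ∫_{ℝ∖[D,E]} exp( (A·h + B)²/C ) dγ₁(h) = ( √C / (2·√(C − 2A²)) ) · exp( B²/(C − 2A²) ) · (2 − Q), where Q = erf( (C·E − 2A²·E − 2A·B)/(√2·√C·√(C − 2A²)) ) − erf( (C·D − 2A²·D − 2A·B)/(√2·√C·√(C − 2A²)) ). -/

import Mathlib

open MeasureTheory ProbabilityTheory Real
open scoped NNReal ENNReal

/-- The error function `erf x = (2/√π) ∫₀ˣ e^{-t²} dt`. -/
noncomputable def erf (x : ℝ) : ℝ := (2 / Real.sqrt π) * ∫ t in (0:ℝ)..x, Real.exp (-t ^ 2)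

set_option maxHeartbeats 1600000 in
/-- Tilted truncated Gaussian integral (the core of `I_{x1}`):
`∫_{ℝ∖[D,E]} e^{(Ah+B)²/C} dγ₁(h)` in closed form. -/
theorem stmt13 (A B C D E : ℝ) (hC : 2 * A ^ 2 < C) (hDE : D ≤ E)
    (Q : ℝ)
    (hQ : Q = erf ((C * E - 2 * A ^ 2 * E - 2 * A * B) /
          (Real.sqrt 2 * Real.sqrt C * Real.sqrt (C - 2 * A ^ 2)))
      - erf ((C * D - 2 * A ^ 2 * D - 2 * A * B) /
          (Real.sqrt 2 * Real.sqrt C * Real.sqrt (C - 2 * A ^ 2)))) :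
    ∫ h in (Set.Icc D E)ᶜ, Real.exp ((A * h + B) ^ 2 / C) ∂(gaussianReal 0 1)
      = (Real.sqrt C / (2 * Real.sqrt (C - 2 * A ^ 2))) *
          Real.exp (B ^ 2 / (C - 2 * A ^ 2)) * (2 - Q) := by
  have hA2 : (0:ℝ) ≤ 2 * A ^ 2 := by positivity
  have hCpos : (0:ℝ) < C := lt_of_le_of_lt hA2 hC
  have hKpos : (0:ℝ) < C - 2 * A ^ 2 := by linarith
  set k : ℝ := (C - 2 * A ^ 2) / (2 * C) with hk
  have hkpos : 0 < k := by positivity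
  set m : ℝ := 2 * A * B / (C - 2 * A ^ 2) with hm
  set c : ℝ := (Real.sqrt (2 * π))⁻¹ * Real.exp (B ^ 2 / (C - 2 * A ^ 2)) with hc
  -- pointwise identity
  have hpt : ∀ h : ℝ, gaussianPDFReal 0 1 h * Real.exp ((A * h + B) ^ 2 / C)
      = c * Real.exp (-(k * (h - m) ^ 2)) := by
    intro h
    rw [gaussianPDFReal]
    simp only [NNReal.coe_one, mul_one, sub_zero]
    rw [hc, mul_assoc, mul_assoc, ← Real.exp_add, ← Real.exp_add]
    congr 2
    rw [hk, hm]
    field_simp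
    ring
  -- reduce gaussianReal set integrals to volume integrals
  have key : ∀ s : Set ℝ, MeasurableSet s →
      (∫ h in s, Real.exp ((A * h + B) ^ 2 / C) ∂(gaussianReal 0 1))
        = ∫ h in s, c * Real.exp (-(k * (h - m) ^ 2)) := by
    intro s hs
    rw [gaussianReal_of_var_ne_zero _ one_ne_zero]
    have hd : gaussianPDF 0 1 = fun x => ((Real.toNNReal (gaussianPDFReal 0 1 x) : ℝ≥0) : ℝ≥0∞) :=
      rfl
    rw [hd, setIntegral_withDensity_eq_setIntegral_smul
      ((measurable_gaussianPDFReal 0 1).real_toNNReal) _ hs]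
    refine setIntegral_congr_fun hs fun x _ => ?_
    rw [NNReal.smul_def, Real.coe_toNNReal _ (gaussianPDFReal_nonneg 0 1 x), smul_eq_mul, hpt x]
  -- integrability
  have hIntBase : Integrable (fun h : ℝ => Real.exp (-(k * (h - m) ^ 2))) := by
    have := (integrable_exp_neg_mul_sq hkpos).comp_sub_right m
    simpa [neg_mul] using this
  have hInt : Integrable (fun h : ℝ => c * Real.exp (-(k * (h - m) ^ 2))) :=
    hIntBase.const_mul c
  -- split over complement
  have hsplit := integral_add_compl (measurableSet_Icc (a := D) (b := E)) hInt
  -- total integral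
  have htotal : (∫ h : ℝ, Real.exp (-(k * (h - m) ^ 2))) = Real.sqrt (π / k) := by
    rw [integral_sub_right_eq_self (fun h : ℝ => Real.exp (-(k * h ^ 2))) m]
    simpa [neg_mul] using integral_gaussian k
  have hsk : (0:ℝ) < Real.sqrt k := Real.sqrt_pos.mpr hkpos
  -- Icc integral via interval integral and substitution
  have hcont : Continuous fun t : ℝ => Real.exp (-t ^ 2) := by continuity
  have hIcc : (∫ h in Set.Icc D E, Real.exp (-(k * (h - m) ^ 2)))
      = (Real.sqrt k)⁻¹ *
        ∫ t in (Real.sqrt k * (D - m))..(Real.sqrt k * (E - m)), Real.exp (-t ^ 2) := by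
    rw [integral_Icc_eq_integral_Ioc, ← intervalIntegral.integral_of_le hDE]
    have hsub := intervalIntegral.integral_comp_mul_add (a := D) (b := E)
      (f := fun t => Real.exp (-t ^ 2)) (c := Real.sqrt k) (ne_of_gt hsk)
      (-(Real.sqrt k * m))
    have harg : ∀ x : ℝ, Real.exp (-(Real.sqrt k * x + -(Real.sqrt k * m)) ^ 2)
        = Real.exp (-(k * (x - m) ^ 2)) := by
      intro x
      congr 1
      have hsq : Real.sqrt k ^ 2 = k := Real.sq_sqrt hkpos.le
      linear_combination (-(x - m) ^ 2) * hsq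
    simp only [harg, smul_eq_mul] at hsub
    rw [show Real.sqrt k * D + -(Real.sqrt k * m) = Real.sqrt k * (D - m) by ring,
      show Real.sqrt k * E + -(Real.sqrt k * m) = Real.sqrt k * (E - m) by ring] at hsub
    exact hsub
  -- identify the interval integral with erf difference
  have hskk : Real.sqrt k = Real.sqrt (C - 2 * A ^ 2) / (Real.sqrt 2 * Real.sqrt C) := by
    rw [hk, Real.sqrt_div hKpos.le, Real.sqrt_mul (by norm_num : (0:ℝ) ≤ 2)]
  have hs2 : Real.sqrt 2 ≠ 0 := by positivity
  have hsC : Real.sqrt C ≠ 0 := by positivity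
  have hsK : Real.sqrt (C - 2 * A ^ 2) ≠ 0 := by positivity
  have hsqK : Real.sqrt (C - 2 * A ^ 2) ^ 2 = C - 2 * A ^ 2 := Real.sq_sqrt hKpos.le
  have hargX : ∀ X : ℝ, Real.sqrt k * (X - m)
      = (C * X - 2 * A ^ 2 * X - 2 * A * B) /
          (Real.sqrt 2 * Real.sqrt C * Real.sqrt (C - 2 * A ^ 2)) := by
    intro X
    rw [hskk, hm]
    field_simp
    linear_combination ((C - 2 * A ^ 2) * X - 2 * A * B) * hsqK
  -- interval integral equals (√π/2) * Q
  have hII : IntervalIntegrable (fun t : ℝ => Real.exp (-t ^ 2)) volume 0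
      (Real.sqrt k * (E - m)) := hcont.intervalIntegrable _ _
  have hII' : IntervalIntegrable (fun t : ℝ => Real.exp (-t ^ 2)) volume 0
      (Real.sqrt k * (D - m)) := hcont.intervalIntegrable _ _
  have hsπ : Real.sqrt π ≠ 0 := by positivity
  have hQint : (∫ t in (Real.sqrt k * (D - m))..(Real.sqrt k * (E - m)), Real.exp (-t ^ 2))
      = (Real.sqrt π / 2) * Q := by
    rw [hQ, erf, erf, ← hargX, ← hargX, ← mul_sub,
      ← intervalIntegral.integral_interval_sub_left hII hII']
    field_simp
  rw [key _ measurableSet_Icc.compl]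
  have h1 : (∫ x in (Set.Icc D E)ᶜ, c * Real.exp (-(k * (x - m) ^ 2)))
      = (∫ x : ℝ, c * Real.exp (-(k * (x - m) ^ 2)))
        - ∫ x in Set.Icc D E, c * Real.exp (-(k * (x - m) ^ 2)) := by
    linarith [hsplit]
  rw [h1, integral_const_mul, integral_const_mul, htotal, hIcc, hQint,
    Real.sqrt_div Real.pi_pos.le, hskk, hc, Real.sqrt_mul (by norm_num : (0:ℝ) ≤ 2)]
  field_simp
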